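/- There exists a nonzero real Banach space X such that inf_{x ∈ S_X} Δc(x) = 0 while Dc(x) > 0 for every x ∈ S_X. -/

import Mathlib

open Set Metric Filter

variable {X : Type*} [NormedAddCommGroup X] [NormedSpace ℝ X]

/-- The slice `S(f, δ)` of the closed unit ball of `X`, determined by a norm-one functional
`f` and `δ > 0` (the norm and positivity conditions are imposed at use sites). -/
def unitBallSlice (f : X →L[ℝ] ℝ) (δ : ℝ) : Set X :=
  {y | ‖y‖ ≤ 1 ∧ 1 - δ < f y}

/-- The Daugavet constant of a point: the infimum over all slices of the unit ball of the
supremum of distances from `x` to points of the slice. -/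
noncomputable def Dc (x : X) : ℝ :=
  sInf {r | ∃ (f : X →L[ℝ] ℝ) (δ : ℝ), ‖f‖ = 1 ∧ 0 < δ ∧
    r = sSup ((fun y => ‖x - y‖) '' unitBallSlice f δ)}

/-- The Δ-constant of a point: the infimum over all slices of the unit ball containing `x`
of the supremum of distances from `x` to points of the slice. -/
noncomputable def DeltaC (x : X) : ℝ :=
  sInf {r | ∃ (f : X →L[ℝ] ℝ) (δ : ℝ), ‖f‖ = 1 ∧ 0 < δ ∧ x ∈ unitBallSlice f δ ∧
    r = sSup ((fun y => ‖x - y‖) '' unitBallSlice f δ)}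

-- generic helpers
lemma slice_image_bddAbove (x : X) (f : X →L[ℝ] ℝ) (δ : ℝ) :
    BddAbove ((fun y => ‖x - y‖) '' unitBallSlice f δ) := by
  refine ⟨‖x‖ + 1, ?_⟩
  rintro r ⟨y, hy, rfl⟩
  exact le_trans (norm_sub_le _ _) (by linarith [hy.1])

lemma slice_sSup_nonneg {x : X} {f : X →L[ℝ] ℝ} {δ : ℝ}
    (hx : x ∈ unitBallSlice f δ) :
    0 ≤ sSup ((fun y => ‖x - y‖) '' unitBallSlice f δ) := by
  have h0 : (0:ℝ) ∈ (fun y => ‖x - y‖) '' unitBallSlice f δ :=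
    ⟨x, hx, by simp⟩
  exact le_csSup (slice_image_bddAbove x f δ) h0

lemma DeltaC_nonneg (x : X) : 0 ≤ DeltaC x := by
  apply Real.sInf_nonneg
  rintro r ⟨f, δ, _, _, hx, rfl⟩
  exact slice_sSup_nonneg hx

noncomputable section
open scoped ZeroAtInfty

abbrev c0 : Type := C₀(ℕ, ℝ)

def csingle (m : ℕ) (s : ℝ) : c0 :=
  ⟨⟨fun k => if k = m then s else 0, by continuity⟩, by
    rw [cocompact_eq_cofinite]
    apply Filter.Tendsto.congr' (f₁ := fun _ => (0:ℝ)) _ tendsto_const_nhds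
    filter_upwards [(Set.finite_singleton m).compl_mem_cofinite] with k hk
    simp only [Set.mem_compl_iff, Set.mem_singleton_iff] at hk
    simp [hk]⟩

@[simp] lemma csingle_apply (m : ℕ) (s : ℝ) (k : ℕ) :
    csingle m s k = if k = m then s else 0 := rfl

lemma c0_norm_le {u : c0} {r : ℝ} (hr : 0 ≤ r) (h : ∀ k, |u k| ≤ r) : ‖u‖ ≤ r := by
  rw [← ZeroAtInftyContinuousMap.norm_toBCF_eq_norm]
  exact BoundedContinuousFunction.norm_le hr |>.mpr (by simpa using h)

lemma c0_apply_le_norm (u : c0) (k : ℕ) : |u k| ≤ ‖u‖ := by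
  rw [← ZeroAtInftyContinuousMap.norm_toBCF_eq_norm]
  simpa using (u.toBCF.norm_coe_le_norm k)

lemma c0_norm_single (m : ℕ) (s : ℝ) : ‖csingle m s‖ = |s| := by
  refine le_antisymm (c0_norm_le (abs_nonneg s) ?_) ?_
  · intro k; by_cases h : k = m <;> simp [h, abs_nonneg]
  · simpa using c0_apply_le_norm (csingle m s) m

-- exists small coordinate
lemma c0_exists_small (u : c0) {ε : ℝ} (hε : 0 < ε) : ∃ m, |u m| < ε := by
  have h := u.zero_at_infty'
  rw [cocompact_eq_cofinite] at h
  have := (h.eventually (eventually_abs_sub_lt 0 hε)).exists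
  simpa using this


def rho (n : ℕ) : ℝ := 1 / (n + 2)
lemma rho_pos (n : ℕ) : 0 < rho n := by rw [rho]; positivity
lemma rho_le_half (n : ℕ) : rho n ≤ 1/2 := by
  rw [rho, div_le_div_iff₀ (by positivity) (by norm_num)]
  linarith [Nat.cast_nonneg (α := ℝ) n]
lemma rho_lt_one (n : ℕ) : rho n < 1 := lt_of_le_of_lt (rho_le_half n) (by norm_num)
lemma one_sub_rho_nonneg (n : ℕ) : (0:ℝ) ≤ 1 - rho n := by linarith [rho_lt_one n]

def Z (_ : ℕ) : Type := ℝ × c0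

instance (n : ℕ) : AddCommGroup (Z n) := inferInstanceAs (AddCommGroup (ℝ × c0))
instance (n : ℕ) : Module ℝ (Z n) := inferInstanceAs (Module ℝ (ℝ × c0))

@[simp] lemma Z_add_fst {n} (a b : Z n) : (a + b).1 = a.1 + b.1 := rfl
@[simp] lemma Z_add_snd {n} (a b : Z n) : (a + b).2 = a.2 + b.2 := rfl
@[simp] lemma Z_neg_fst {n} (a : Z n) : (-a).1 = -a.1 := rfl
@[simp] lemma Z_neg_snd {n} (a : Z n) : (-a).2 = -a.2 := rfl
@[simp] lemma Z_sub_fst {n} (a b : Z n) : (a - b).1 = a.1 - b.1 := rfl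
@[simp] lemma Z_sub_snd {n} (a b : Z n) : (a - b).2 = a.2 - b.2 := rfl
@[simp] lemma Z_smul_fst {n} (c : ℝ) (a : Z n) : (c • a).1 = c * a.1 := rfl
@[simp] lemma Z_smul_snd {n} (c : ℝ) (a : Z n) : (c • a).2 = c • a.2 := rfl
@[simp] lemma Z_zero_fst {n} : ((0 : Z n)).1 = 0 := rfl
@[simp] lemma Z_zero_snd {n} : ((0 : Z n)).2 = 0 := rfl

def ZNorm (n : ℕ) (z : Z n) : ℝ := max |z.1| (‖z.2‖ + (1 - rho n) * |z.1|)

def ZGroupNorm (n : ℕ) : AddGroupNorm (Z n) where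
  toFun := ZNorm n
  map_zero' := by simp [ZNorm]
  add_le' := by
    intro a b
    have h1 : |(a + b).1| ≤ |a.1| + |b.1| := by rw [Z_add_fst]; exact abs_add_le _ _
    have h2 : ‖(a + b).2‖ ≤ ‖a.2‖ + ‖b.2‖ := by rw [Z_add_snd]; exact norm_add_le _ _
    have hk : (0:ℝ) ≤ 1 - rho n := one_sub_rho_nonneg n
    simp only [ZNorm, max_le_iff]
    constructor
    · exact h1.trans (add_le_add (le_max_left _ _) (le_max_left _ _))
    · calc ‖(a+b).2‖ + (1 - rho n) * |(a+b).1|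
          ≤ (‖a.2‖ + ‖b.2‖) + (1 - rho n) * (|a.1| + |b.1|) := by
            apply add_le_add h2 (by nlinarith)
        _ = (‖a.2‖ + (1 - rho n) * |a.1|) + (‖b.2‖ + (1 - rho n) * |b.1|) := by ring
        _ ≤ _ := add_le_add (le_max_right _ _) (le_max_right _ _)
  neg' := by intro a; simp [ZNorm]
  eq_zero_of_map_eq_zero' := by
    intro a h
    have hk : (0:ℝ) ≤ 1 - rho n := one_sub_rho_nonneg n
    have h2 : ZNorm n a ≤ 0 := le_of_eq h
    simp only [ZNorm, max_le_iff] at h2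
    have h1 : a.1 = 0 := abs_eq_zero.mp (le_antisymm h2.1 (abs_nonneg _))
    have h3 : a.2 = 0 := by
      have := h2.2
      have : ‖a.2‖ ≤ 0 := by nlinarith [norm_nonneg a.2, abs_nonneg a.1]
      exact norm_eq_zero.mp (le_antisymm this (norm_nonneg _))
    exact Prod.ext h1 h3

instance ZNormed (n : ℕ) : NormedAddCommGroup (Z n) := (ZGroupNorm n).toNormedAddCommGroup

lemma Z_norm_def {n} (z : Z n) : ‖z‖ = max |z.1| (‖z.2‖ + (1 - rho n) * |z.1|) := rfl

instance (n : ℕ) : NormedSpace ℝ (Z n) where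
  norm_smul_le c z := by
    rw [Z_norm_def, Z_norm_def]
    have h2 : ‖(c • z).2‖ = |c| * ‖z.2‖ := by
      rw [Z_smul_snd]
      refine le_antisymm (c0_norm_le (by positivity) fun k => ?_) ?_
      · rw [ZeroAtInftyContinuousMap.smul_apply, smul_eq_mul, abs_mul]
        exact mul_le_mul_of_nonneg_left (c0_apply_le_norm _ _) (abs_nonneg c)
      · rcases eq_or_ne c 0 with hc | hc
        · simp [hc]
        · rw [← le_div_iff₀' (by positivity)]
          apply c0_norm_le (by positivity)
          intro k
          rw [le_div_iff₀' (by positivity), ← abs_mul]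
          have : c * z.2 k = (c • z.2) k := by
            rw [ZeroAtInftyContinuousMap.smul_apply, smul_eq_mul]
          rw [this]
          exact c0_apply_le_norm _ _
    simp only [Z_smul_fst, abs_mul, h2, Real.norm_eq_abs]
    rw [mul_max_of_nonneg _ _ (abs_nonneg c)]
    apply max_le_max le_rfl
    apply le_of_eq; ring

lemma Z_fst_le_norm {n} (z : Z n) : |z.1| ≤ ‖z‖ := le_max_left _ _
lemma Z_snd_le_norm {n} (z : Z n) : ‖z.2‖ ≤ ‖z‖ := by
  rw [Z_norm_def]
  have := mul_nonneg (one_sub_rho_nonneg n) (abs_nonneg z.1)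
  exact le_trans (by linarith) (le_max_right _ _)
lemma Z_norm_le_add {n} (z : Z n) : ‖z‖ ≤ |z.1| + ‖z.2‖ := by
  rw [Z_norm_def, max_le_iff]
  have h1 := mul_nonneg (rho_pos n).le (abs_nonneg z.1)
  constructor
  · linarith [norm_nonneg z.2]
  · nlinarith [abs_nonneg z.1, rho_pos n]

instance (n : ℕ) : CompleteSpace (Z n) := by
  apply Metric.complete_of_cauchySeq_tendsto
  intro F hF
  have l1 : LipschitzWith 1 (fun z : Z n => z.1) := by
    apply LipschitzWith.of_dist_le_mul
    intro a b
    rw [NNReal.coe_one, one_mul, dist_eq_norm, dist_eq_norm, Real.norm_eq_abs]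
    exact Z_fst_le_norm (a - b)
  have l2 : LipschitzWith 1 (fun z : Z n => z.2) := by
    apply LipschitzWith.of_dist_le_mul
    intro a b
    rw [NNReal.coe_one, one_mul, dist_eq_norm, dist_eq_norm]
    exact Z_snd_le_norm (a - b)
  obtain ⟨t0, ht⟩ := cauchySeq_tendsto_of_complete
    (l1.uniformContinuous.comp_cauchySeq hF)
  obtain ⟨u0, hu⟩ := cauchySeq_tendsto_of_complete
    (l2.uniformContinuous.comp_cauchySeq hF)
  refine ⟨((t0, u0) : ℝ × c0), ?_⟩
  refine tendsto_iff_norm_sub_tendsto_zero.mpr ?_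
  set L : Z n := ((t0, u0) : ℝ × c0) with hL
  have key : ∀ k, ‖F k - L‖ ≤ |(F k).1 - t0| + ‖(F k).2 - u0‖ := by
    intro k
    have := Z_norm_le_add (F k - L)
    simpa using this
  have h1 : Filter.Tendsto (fun k => |(F k).1 - t0| + ‖(F k).2 - u0‖)
      Filter.atTop (nhds 0) := by
    rw [show (0:ℝ) = 0 + 0 by norm_num]
    apply Filter.Tendsto.add
    · have := (tendsto_iff_norm_sub_tendsto_zero).mp ht
      simpa [Real.norm_eq_abs] using this
    · exact (tendsto_iff_norm_sub_tendsto_zero).mp hu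
  apply squeeze_zero (fun k => norm_nonneg _) key h1

-- lp facts
lemma Y_hasSum (y : lp Z 1) : HasSum (fun k => ‖y k‖) ‖y‖ := by
  have h := lp.hasSum_norm (p := 1) (by norm_num) y
  simpa using h

lemma Y_norm_single (k : ℕ) (z : Z k) : ‖lp.single 1 k z‖ = ‖z‖ := by
  have h := lp.norm_single (p := 1) (E := Z) (by norm_num) k z
  simpa using h

lemma Y_single_apply_self (k : ℕ) (z : Z k) : (lp.single 1 k z : ∀ i, Z i) k = z :=
  lp.single_apply_self 1 k z

lemma Y_single_apply_ne (k : ℕ) (z : Z k) {j : ℕ} (h : j ≠ k) :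
    (lp.single 1 k z : ∀ i, Z i) j = 0 :=
  lp.single_apply_ne 1 k z h

lemma Y_apply_le_norm (y : lp Z 1) (k : ℕ) : ‖y k‖ ≤ ‖y‖ :=
  lp.norm_apply_le_norm one_ne_zero y k

def gn (n : ℕ) : lp Z 1 →L[ℝ] ℝ :=
  LinearMap.mkContinuous
    { toFun := fun y => (y n).1
      map_add' := by
        intro a b
        show (((a + b : lp Z 1) : ∀ i, Z i) n).1
            = ((a : ∀ i, Z i) n).1 + ((b : ∀ i, Z i) n).1
        rw [lp.coeFn_add, Pi.add_apply, Z_add_fst]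
      map_smul' := by
        intro c a
        show (((c • a : lp Z 1) : ∀ i, Z i) n).1 = (RingHom.id ℝ) c • ((a : ∀ i, Z i) n).1
        rw [lp.coeFn_smul, Pi.smul_apply, Z_smul_fst]
        simp }
    1
    (by
      intro y
      simp only [LinearMap.coe_mk, AddHom.coe_mk, one_mul, Real.norm_eq_abs]
      exact le_trans (Z_fst_le_norm (y n)) (Y_apply_le_norm y n))

@[simp] lemma gn_apply (n : ℕ) (y : lp Z 1) : gn n y = (y n).1 := rfl

-- elements of Z n
def mkZ (n : ℕ) (t : ℝ) (u : c0) : Z n := (t, u)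
@[simp] lemma mkZ_fst {n} (t u) : (mkZ n t u).1 = t := rfl
@[simp] lemma mkZ_snd {n} (t u) : (mkZ n t u).2 = u := rfl

lemma mkZ_norm (n : ℕ) (t : ℝ) (u : c0) :
    ‖mkZ n t u‖ = max |t| (‖u‖ + (1 - rho n) * |t|) := by
  rw [Z_norm_def, mkZ_fst, mkZ_snd]

-- the distinguished points
def xn (n : ℕ) : lp Z 1 := lp.single 1 n (mkZ n 1 0)

lemma Z_one_zero_norm (n : ℕ) : ‖mkZ n 1 0‖ = 1 := by
  rw [mkZ_norm]
  have h := rho_pos n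
  rw [norm_zero, abs_one, max_eq_left]
  linarith

lemma xn_norm (n : ℕ) : ‖xn n‖ = 1 := by
  rw [xn, Y_norm_single, Z_one_zero_norm]

lemma gn_norm (n : ℕ) : ‖gn n‖ = 1 := by
  apply le_antisymm
  · exact LinearMap.mkContinuous_norm_le _ (by norm_num) _
  · have h := (gn n).le_opNorm (xn n)
    rw [xn_norm, mul_one, gn_apply] at h
    rw [xn, Y_single_apply_self] at h
    simpa using h

lemma Z_snd_term_le_norm {n} (z : Z n) : ‖z.2‖ + (1 - rho n) * |z.1| ≤ ‖z‖ := by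
  rw [Z_norm_def]; exact le_max_right _ _

lemma slice_dist_bound (n : ℕ) {δ : ℝ} (hδ : 0 < δ) (hδ1 : δ ≤ 1)
    {y : lp Z 1} (hy : y ∈ unitBallSlice (gn n) δ) :
    ‖xn n - y‖ ≤ rho n + 3*δ := by
  obtain ⟨hy1, hy2⟩ := hy
  rw [gn_apply] at hy2
  set t := ((y : ∀ i, Z i) n).1 with ht
  set u := ((y : ∀ i, Z i) n).2 with hu
  have hblk : ‖(y : ∀ i, Z i) n‖ ≤ 1 := le_trans (Y_apply_le_norm y n) hy1
  have htle : |t| ≤ ‖(y : ∀ i, Z i) n‖ := Z_fst_le_norm _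
  have huθ : ‖u‖ + (1 - rho n) * |t| ≤ 1 := le_trans (Z_snd_term_le_norm _) hblk
  have ht1 : 1 - δ < t := hy2
  have ht0 : 0 ≤ 1 - δ := by linarith
  have habs : |t| = t := abs_of_pos (by linarith)
  have htle1 : t ≤ 1 := by
    have := le_trans htle hblk; rw [habs] at this; exact this
  have hunorm : ‖u‖ ≤ rho n + δ := by nlinarith [rho_pos n, rho_lt_one n]
  -- decompose norm of difference
  have hsum_y := Y_hasSum y
  have hsum_d := Y_hasSum (xn n - y)
  have heq : (fun k => ‖((xn n - y : lp Z 1) : ∀ i, Z i) k‖)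
      = Function.update (fun k => ‖(y : ∀ i, Z i) k‖) n
          ‖mkZ n 1 0 - (y : ∀ i, Z i) n‖ := by
    funext k
    have hd : ((xn n - y : lp Z 1) : ∀ i, Z i) k
        = (xn n : ∀ i, Z i) k - (y : ∀ i, Z i) k := by
      rw [lp.coeFn_sub]; rfl
    by_cases hk : k = n
    · subst hk
      rw [Function.update_self, hd, xn, Y_single_apply_self]
    · rw [Function.update_of_ne hk, hd, xn, Y_single_apply_ne _ _ hk, zero_sub, norm_neg]
  have hupd := hsum_y.update n ‖mkZ n 1 0 - (y : ∀ i, Z i) n‖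
  rw [← heq] at hupd
  have hval : ‖xn n - y‖
      = ‖mkZ n 1 0 - (y : ∀ i, Z i) n‖ - ‖(y : ∀ i, Z i) n‖ + ‖y‖ :=
    hsum_d.unique hupd
  have hdiff : ‖mkZ n 1 0 - (y : ∀ i, Z i) n‖ ≤ (1 - t) + ‖u‖ := by
    have h := Z_norm_le_add (mkZ n 1 0 - (y : ∀ i, Z i) n)
    have h1 : (mkZ n 1 0 - (y : ∀ i, Z i) n).1 = 1 - t := by
      rw [Z_sub_fst, mkZ_fst]
    have h2 : (mkZ n 1 0 - (y : ∀ i, Z i) n).2 = 0 - u := by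
      rw [Z_sub_snd, mkZ_snd]
    rw [h1, h2, zero_sub, norm_neg] at h
    refine h.trans ?_
    rw [abs_of_nonneg (by linarith)]
  have hblk_low : 1 - δ ≤ ‖(y : ∀ i, Z i) n‖ := by
    rw [habs] at htle; linarith
  rw [hval]
  have : ‖y‖ ≤ 1 := hy1
  linarith

lemma DeltaC_set_bddBelow (x : lp Z 1) :
    BddBelow {r | ∃ (f : lp Z 1 →L[ℝ] ℝ) (δ : ℝ), ‖f‖ = 1 ∧ 0 < δ ∧
      x ∈ unitBallSlice f δ ∧
      r = sSup ((fun y => ‖x - y‖) '' unitBallSlice f δ)} := by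
  refine ⟨0, ?_⟩
  rintro r ⟨f, δ, _, _, hx, rfl⟩
  exact slice_sSup_nonneg hx

lemma DeltaC_xn_le (n : ℕ) : DeltaC (xn n) ≤ rho n := by
  apply le_of_forall_pos_le_add
  intro ε hε
  set δ := min (ε/3) 1 with hδdef
  have hδ : 0 < δ := lt_min (by linarith) one_pos
  have hδ1 : δ ≤ 1 := min_le_right _ _
  have hxmem : xn n ∈ unitBallSlice (gn n) δ := by
    constructor
    · rw [xn_norm]
    · rw [gn_apply, xn, Y_single_apply_self, mkZ_fst]; linarith
  have hmem : sSup ((fun y => ‖xn n - y‖) '' unitBallSlice (gn n) δ)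
      ∈ {r | ∃ (f : lp Z 1 →L[ℝ] ℝ) (δ' : ℝ), ‖f‖ = 1 ∧ 0 < δ' ∧
        xn n ∈ unitBallSlice f δ' ∧
        r = sSup ((fun y => ‖xn n - y‖) '' unitBallSlice f δ')} :=
    ⟨gn n, δ, gn_norm n, hδ, hxmem, rfl⟩
  have h1 : DeltaC (xn n) ≤ sSup ((fun y => ‖xn n - y‖) '' unitBallSlice (gn n) δ) :=
    csInf_le (DeltaC_set_bddBelow _) hmem
  refine h1.trans ?_
  have h2 : sSup ((fun y => ‖xn n - y‖) '' unitBallSlice (gn n) δ) ≤ rho n + 3*δ := by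
    apply Real.sSup_le
    · rintro r ⟨y, hy, rfl⟩
      exact slice_dist_bound n hδ hδ1 hy
    · have := rho_pos n; linarith
  refine h2.trans ?_
  have : 3*δ ≤ ε := by
    have : δ ≤ ε/3 := min_le_left _ _
    linarith
  linarith

@[simp] lemma csingle_smul (m : ℕ) (c s : ℝ) : c • csingle m s = csingle m (c * s) := by
  ext k
  rw [ZeroAtInftyContinuousMap.smul_apply, smul_eq_mul]
  by_cases h : k = m <;> simp [h]

lemma c0_add_single_le {u : c0} {m : ℕ} {c r : ℝ}
    (h1 : ‖u‖ ≤ r) (h2 : |u m| + |c| ≤ r) : ‖u + csingle m c‖ ≤ r := by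
  apply c0_norm_le (le_trans (norm_nonneg u) h1)
  intro k
  have : (u + csingle m c) k = u k + csingle m c k := rfl
  rw [this]
  by_cases hk : k = m
  · subst hk; simp only [csingle_apply, if_pos rfl]
    exact le_trans (abs_add_le _ _) h2
  · simp only [csingle_apply, if_neg hk, add_zero]
    exact le_trans (c0_apply_le_norm u k) h1

lemma Z_perturb {n : ℕ} {z : Z n} {a c : ℝ} {m : ℕ}
    (ha : ‖z‖ ≤ a) (hc : |z.2 m| + |c| ≤ rho n * a) :
    ‖mkZ n z.1 (z.2 + csingle m c)‖ ≤ a := by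
  have ha0 : 0 ≤ a := le_trans (norm_nonneg z) ha
  have h1 : |z.1| ≤ a := le_trans (Z_fst_le_norm z) ha
  have hterm := le_trans (Z_snd_term_le_norm z) ha
  have hk : (0:ℝ) ≤ 1 - rho n := one_sub_rho_nonneg n
  rw [mkZ_norm, max_le_iff]
  refine ⟨h1, ?_⟩
  by_cases hcase : |z.2 m| + |c| ≤ ‖z.2‖
  · have := c0_add_single_le (le_refl ‖z.2‖) hcase
    linarith
  · push_neg at hcase
    have h2 : ‖z.2 + csingle m c‖ ≤ rho n * a :=
      c0_add_single_le (le_trans hcase.le hc) hc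
    nlinarith

lemma Y_norm_update {y w : lp Z 1} (n : ℕ)
    (hws : ∀ k, k ≠ n → (w : ∀ i, Z i) k = (y : ∀ i, Z i) k) :
    ‖w‖ = ‖y‖ - ‖(y : ∀ i, Z i) n‖ + ‖(w : ∀ i, Z i) n‖ := by
  have hsum_y := Y_hasSum y
  have hsum_w := Y_hasSum w
  have heq : (fun k => ‖(w : ∀ i, Z i) k‖)
      = Function.update (fun k => ‖(y : ∀ i, Z i) k‖) n ‖(w : ∀ i, Z i) n‖ := by
    funext k
    by_cases hk : k = n
    · subst hk; rw [Function.update_self]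
    · rw [Function.update_of_ne hk, hws k hk]
  have hupd := hsum_y.update n ‖(w : ∀ i, Z i) n‖
  rw [← heq] at hupd
  exact hsum_w.unique (by rw [show ‖y‖ - ‖(y : ∀ i, Z i) n‖ + ‖(w : ∀ i, Z i) n‖ = ‖(w : ∀ i, Z i) n‖ - ‖(y : ∀ i, Z i) n‖ + ‖y‖ by ring]; exact hupd)

lemma rho_antitone {n M : ℕ} (h : n ≤ M) : rho M ≤ rho n := by
  rw [rho, rho]
  apply div_le_div_of_nonneg_left (by norm_num) (by positivity)
  have : (n:ℝ) ≤ M := Nat.cast_le.mpr h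
  linarith

lemma slice_sSup_ge (x : lp Z 1) (hx : ‖x‖ = 1) {M : ℕ} (hM : 0 < M)
    (hxM : 7/8 < ∑ k ∈ Finset.range M, ‖(x : ∀ i, Z i) k‖)
    (f : lp Z 1 →L[ℝ] ℝ) (δ : ℝ) (hf : ‖f‖ = 1) (hδ : 0 < δ) :
    min (1/16 : ℝ) (rho M * 5/(32*M)) ≤
      sSup ((fun y => ‖x - y‖) '' unitBallSlice f δ) := by
  set δ' := min δ (1/8 : ℝ) with hδ'def
  have hδ' : 0 < δ' := lt_min hδ (by norm_num)
  have hδ'8 : δ' ≤ 1/8 := min_le_right _ _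
  have hδ'δ : δ' ≤ δ := min_le_left _ _
  -- find y in the slice with margin
  obtain ⟨z, hz1, hz2⟩ := f.exists_lt_apply_of_lt_opNorm (r := 1 - δ')
    (by rw [hf]; linarith)
  set y : lp Z 1 := if 0 ≤ f z then z else -z with hydef
  have hy1 : ‖y‖ ≤ 1 := by
    rw [hydef]; split <;> simp [norm_neg, hz1.le]
  have hyf : 1 - δ' < f y := by
    rw [hydef]
    rcases le_or_gt 0 (f z) with h | h
    · rw [if_pos h]; rwa [Real.norm_eq_abs, abs_of_nonneg h] at hz2
    · rw [if_neg (not_le.mpr h), map_neg]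
      rwa [Real.norm_eq_abs, abs_of_neg h] at hz2
  have hymem : y ∈ unitBallSlice f δ := ⟨hy1, by linarith⟩
  set mx := sSup ((fun y => ‖x - y‖) '' unitBallSlice f δ) with hmx
  have bdd := slice_image_bddAbove x f δ
  have hy_le : ‖x - y‖ ≤ mx := le_csSup bdd ⟨y, hymem, rfl⟩
  have hynorm : 7/8 < ‖y‖ := by
    have h1 : f y ≤ ‖f‖ * ‖y‖ := le_trans (le_abs_self _)
      (by rw [← Real.norm_eq_abs]; exact f.le_opNorm y)
    rw [hf, one_mul] at h1
    linarith
  rcases le_or_gt (∑ k ∈ Finset.range M, ‖(y : ∀ i, Z i) k‖) (5/8 : ℝ) with hcase | hcase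
  · -- case 1 : y has mass ≥ 1/4 outside range M
    refine le_trans (min_le_left _ _) ?_
    have hsy := Y_hasSum y
    have htd := hsy.tendsto_sum_nat
    have hev : ∀ᶠ (N : ℕ) in atTop,
        ‖y‖ - 1/16 < ∑ k ∈ Finset.range N, ‖(y : ∀ i, Z i) k‖ :=
      htd.eventually (eventually_gt_nhds (by linarith [norm_nonneg y] ; ))
    obtain ⟨M0, hM0⟩ := hev.exists
    set M' := max M M0 with hM'def
    have hMM' : M ≤ M' := le_max_left _ _
    have hsum_M' : ‖y‖ - 1/16 < ∑ k ∈ Finset.range M', ‖(y : ∀ i, Z i) k‖ := by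
      refine lt_of_lt_of_le hM0 ?_
      apply Finset.sum_le_sum_of_subset_of_nonneg
      · exact Finset.range_subset_range.mpr (le_max_right _ _)
      · intro k _ _; exact norm_nonneg _
    set A := Finset.range M' \ Finset.range M with hAdef
    have hsub : Finset.range M ⊆ Finset.range M' := Finset.range_subset_range.mpr hMM'
    have hAy : (3/16 : ℝ) ≤ ∑ k ∈ A, ‖(y : ∀ i, Z i) k‖ := by
      rw [hAdef, Finset.sum_sdiff_eq_sub hsub]
      linarith
    have hAx : ∑ k ∈ A, ‖(x : ∀ i, Z i) k‖ ≤ 1/8 := by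
      have h1 : ∑ k ∈ Finset.range M', ‖(x : ∀ i, Z i) k‖ ≤ ‖x‖ :=
        sum_le_hasSum _ (fun k _ => norm_nonneg _) (Y_hasSum x)
      rw [hAdef, Finset.sum_sdiff_eq_sub hsub]
      rw [hx] at h1
      linarith
    have hdist : (1/16 : ℝ) ≤ ‖x - y‖ := by
      have h1 : ∑ k ∈ A, ‖((x - y : lp Z 1) : ∀ i, Z i) k‖ ≤ ‖x - y‖ :=
        sum_le_hasSum _ (fun k _ => norm_nonneg _) (Y_hasSum (x - y))
      have h2 : ∀ k ∈ A, ‖(y : ∀ i, Z i) k‖ - ‖(x : ∀ i, Z i) k‖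
          ≤ ‖((x - y : lp Z 1) : ∀ i, Z i) k‖ := by
        intro k _
        have hco : ((x - y : lp Z 1) : ∀ i, Z i) k
            = (x : ∀ i, Z i) k - (y : ∀ i, Z i) k := by
          rw [lp.coeFn_sub]; rfl
        rw [hco, norm_sub_rev]
        exact le_trans (le_abs_self _) (abs_norm_sub_norm_le _ _)
      have h3 := Finset.sum_le_sum h2
      rw [Finset.sum_sub_distrib] at h3
      linarith
    linarith
  · -- case 2 : big block inside range M
    refine le_trans (min_le_right _ _) ?_
    obtain ⟨n, hnmem, hn⟩ : ∃ n ∈ Finset.range M, 5/(8*M) ≤ ‖(y : ∀ i, Z i) n‖ := by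
      by_contra hcon
      push_neg at hcon
      have hne : (Finset.range M).Nonempty := by
        rw [Finset.nonempty_range_iff]; omega
      have hlt := Finset.sum_lt_sum_of_nonempty hne hcon
      rw [Finset.sum_const, Finset.card_range, nsmul_eq_mul] at hlt
      have hMpos : (0:ℝ) < M := Nat.cast_pos.mpr hM
      have heq : (M:ℝ) * (5/(8*M)) = 5/8 := by field_simp
      rw [heq] at hlt
      linarith
    have hnM : n < M := Finset.mem_range.mp hnmem
    set a := ‖(y : ∀ i, Z i) n‖ with hadef
    have hMpos : (0:ℝ) < M := Nat.cast_pos.mpr hM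
    have hβ : (0:ℝ) < 5/(8*M) := by positivity
    have ha : 0 < a := lt_of_lt_of_le hβ hn
    have hsa : 0 < rho n * a / 2 := div_pos (mul_pos (rho_pos n) ha) (by norm_num)
    obtain ⟨m, hm⟩ := c0_exists_small ((y : ∀ i, Z i) n).2 hsa
    set s := rho n * a / 2 with hsdef
    set E : lp Z 1 := lp.single 1 n (mkZ n 0 (csingle m 1)) with hEdef
    have hEnorm : ‖E‖ = 1 := by
      rw [hEdef, Y_norm_single, mkZ_norm, c0_norm_single]
      rw [abs_zero, abs_one, mul_zero, add_zero, max_eq_right (by norm_num)]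
    set σ : ℝ := if 0 ≤ f E then 1 else -1 with hσdef
    have hσabs : |σ * s| = s := by
      rw [abs_mul, hσdef]
      split <;> simp [abs_of_pos hsa, abs_of_nonneg hsa.le]
    set w : lp Z 1 := y + (σ * s) • E with hwdef
    have hcoord : ∀ k, (w : ∀ i, Z i) k
        = (y : ∀ i, Z i) k + (σ * s) • (E : ∀ i, Z i) k := by
      intro k
      rw [hwdef, lp.coeFn_add, Pi.add_apply, lp.coeFn_smul, Pi.smul_apply]
    have hwk : ∀ k, k ≠ n → (w : ∀ i, Z i) k = (y : ∀ i, Z i) k := by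
      intro k hk
      rw [hcoord k, hEdef, Y_single_apply_ne _ _ hk, smul_zero, add_zero]
    have hwn : (w : ∀ i, Z i) n
        = mkZ n (((y : ∀ i, Z i) n).1) ((((y : ∀ i, Z i) n).2) + csingle m (σ * s)) := by
      rw [hcoord n, hEdef, Y_single_apply_self]
      have h1 : ((σ * s) • (mkZ n 0 (csingle m 1)) : Z n)
          = mkZ n 0 (csingle m (σ * s)) := by
        apply Prod.ext
        · rw [Z_smul_fst, mkZ_fst, mkZ_fst, mul_zero]
        · rw [Z_smul_snd, mkZ_snd, mkZ_snd, csingle_smul, mul_one]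
      rw [h1]
      apply Prod.ext
      · rw [Z_add_fst, mkZ_fst, mkZ_fst, add_zero]
      · rw [Z_add_snd, mkZ_snd, mkZ_snd]
    have hwn_norm : ‖(w : ∀ i, Z i) n‖ ≤ a := by
      rw [hwn]
      apply Z_perturb le_rfl
      rw [hσabs]
      rw [hsdef]
      linarith
    have hwnorm : ‖w‖ ≤ 1 := by
      rw [Y_norm_update n hwk]
      rw [← hadef]
      linarith
    have hfw : 1 - δ < f w := by
      rw [hwdef, map_add, map_smul, smul_eq_mul]
      have h1 : σ * s * f E = s * (σ * f E) := by ring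
      have h2 : σ * f E = |f E| := by
        rw [hσdef]
        rcases le_or_gt 0 (f E) with h | h
        · rw [if_pos h, one_mul, abs_of_nonneg h]
        · rw [if_neg (not_le.mpr h), abs_of_neg h]; ring
      have h3 : 0 ≤ σ * s * f E := by
        rw [h1, h2]; positivity
      linarith
    have hwmem : w ∈ unitBallSlice f δ := ⟨hwnorm, hfw⟩
    have hw_le : ‖x - w‖ ≤ mx := le_csSup bdd ⟨w, hwmem, rfl⟩
    have hwy : ‖w - y‖ = s := by
      rw [hwdef, add_sub_cancel_left, norm_smul, hEnorm, Real.norm_eq_abs, hσabs, mul_one]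
    have htri : s ≤ ‖x - y‖ + ‖x - w‖ := by
      have := norm_sub_le_norm_sub_add_norm_sub w x y
      rw [hwy] at this
      rw [norm_sub_rev w x] at this
      linarith
    have hstep : rho M * 5/(32*M) ≤ s / 2 := by
      have h1 : rho M ≤ rho n := rho_antitone (le_of_lt hnM)
      have h2 : rho M * (5/(8*M)) ≤ rho n * a := by
        apply mul_le_mul h1 hn (le_of_lt hβ) (rho_pos n).le
      have h3 : rho M * 5/(32*M) = (rho M * (5/(8*M)))/4 := by
        rw [mul_div_assoc, mul_div_assoc, div_div]; ring_nf
      rw [h3, hsdef]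
      linarith
    linarith

lemma Dc_pos (x : lp Z 1) (hx : ‖x‖ = 1) : 0 < Dc x := by
  have hsx := (Y_hasSum x).tendsto_sum_nat
  rw [hx] at hsx
  have hev : ∀ᶠ (N : ℕ) in atTop,
      7/8 < ∑ k ∈ Finset.range N, ‖(x : ∀ i, Z i) k‖ :=
    hsx.eventually (eventually_gt_nhds (by norm_num))
  obtain ⟨M0, hM0⟩ := hev.exists
  set M := max M0 1 with hMdef
  have hM : 0 < M := lt_of_lt_of_le one_pos (le_max_right _ _)
  have hxM : 7/8 < ∑ k ∈ Finset.range M, ‖(x : ∀ i, Z i) k‖ := by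
    refine lt_of_lt_of_le hM0 ?_
    apply Finset.sum_le_sum_of_subset_of_nonneg
    · exact Finset.range_subset_range.mpr (le_max_left _ _)
    · intro k _ _; exact norm_nonneg _
  set c := min (1/16 : ℝ) (rho M * 5/(32*M)) with hcdef
  have hc : 0 < c := by
    apply lt_min (by norm_num)
    have h1 := rho_pos M
    have h2 : (0:ℝ) < M := Nat.cast_pos.mpr hM
    positivity
  have hne : {r | ∃ (f : lp Z 1 →L[ℝ] ℝ) (δ : ℝ), ‖f‖ = 1 ∧ 0 < δ ∧
      r = sSup ((fun y => ‖x - y‖) '' unitBallSlice f δ)}.Nonempty :=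
    ⟨_, gn 0, 1, gn_norm 0, one_pos, rfl⟩
  have hlb : ∀ r ∈ {r | ∃ (f : lp Z 1 →L[ℝ] ℝ) (δ : ℝ), ‖f‖ = 1 ∧ 0 < δ ∧
      r = sSup ((fun y => ‖x - y‖) '' unitBallSlice f δ)}, c ≤ r := by
    rintro r ⟨f, δ, hf, hδ, rfl⟩
    exact slice_sSup_ge x hx hM hxM f δ hf hδ
  exact lt_of_lt_of_le hc (le_csInf hne hlb)


theorem final :
    sInf (DeltaC '' {x : lp Z 1 | ‖x‖ = 1}) = 0 ∧
      ∀ x : lp Z 1, ‖x‖ = 1 → 0 < Dc x := by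
  constructor
  · have hbdd : BddBelow (DeltaC '' {x : lp Z 1 | ‖x‖ = 1}) := by
      refine ⟨0, ?_⟩
      rintro r ⟨x, _, rfl⟩
      exact DeltaC_nonneg x
    apply le_antisymm
    · apply le_of_forall_pos_le_add
      intro ε hε
      obtain ⟨n, hn⟩ := exists_nat_gt (1/ε)
      have h1 : sInf (DeltaC '' {x : lp Z 1 | ‖x‖ = 1}) ≤ DeltaC (xn n) :=
        csInf_le hbdd ⟨xn n, xn_norm n, rfl⟩
      have h2 : rho n < ε := by
        rw [rho]
        rw [div_lt_iff₀ (by positivity)]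
        rw [div_lt_iff₀ hε] at hn
        have : (n:ℝ) ≤ n + 2 := by linarith
        nlinarith
      have := DeltaC_xn_le n
      linarith
    · apply Real.sInf_nonneg
      rintro r ⟨x, _, rfl⟩
      exact DeltaC_nonneg x
  · intro x hx
    exact Dc_pos x hx


/-- There is a nonzero Banach space in which the infimum of Δ-constants over the unit sphere
is zero, yet every unit-sphere point has positive Daugavet constant. -/
theorem exists_banach_inf_deltaConstant_zero_daugavetConstant_pos :
    ∃ (Y : Type) (_ : NormedAddCommGroup Y) (_ : NormedSpace ℝ Y) (_ : CompleteSpace Y)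
      (_ : Nontrivial Y),
      sInf (DeltaC '' {x : Y | ‖x‖ = 1}) = 0 ∧ ∀ x : Y, ‖x‖ = 1 → 0 < Dc x := by
  refine ⟨lp Z 1, inferInstance, inferInstance, inferInstance, ?_, final⟩
  have hne : xn 0 ≠ 0 := by
    intro h
    have h1 := xn_norm 0
    rw [h, norm_zero] at h1
    norm_num at h1
  exact nontrivial_of_ne (xn 0) 0 hne
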